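/- For the curve f(x,y) = y²+(μ₁x+μ₃)y-(x³+μ₂x²+μ₄x+μ₆) = 0, the expansion of η₁ = -x dx/(2y+μ₁x+μ₃) in the arithmetic parameter t satisfies η₁⟨t⟩/dt ∈ -t⁻² + t·ℤ[μ⃗][[t]]; in particular the coefficients of t⁻¹ and t⁰ vanish, and the expansion begins -t⁻² - μ₃t - (μ₄+2μ₁μ₃)t² - (2μ₁μ₄+2μ₂μ₃+3μ₁²μ₃)t³ - ... -/

import Mathlib

noncomputable section

/-- The coefficient ring `ℤ[μ₁,μ₂,μ₃,μ₄,μ₆]`. -/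
abbrev CoefRing : Type := MvPolynomial (Fin 5) ℤ

def μ1 : CoefRing := MvPolynomial.X 0
def μ2 : CoefRing := MvPolynomial.X 1
def μ3 : CoefRing := MvPolynomial.X 2
def μ4 : CoefRing := MvPolynomial.X 3
def μ6 : CoefRing := MvPolynomial.X 4

open PowerSeries in
/-- The functional equation `s = (1 + μ₂s + μ₄s² + μ₆s³)t² + (μ₁s + μ₃s²)t`
satisfied by `s = 1/x` in the arithmetic parameter `t = -x/y` of the curve
`y² + (μ₁x+μ₃)y = x³ + μ₂x² + μ₄x + μ₆`. -/
def SFunEq (s : PowerSeries CoefRing) : Prop :=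
  s = (1 + C μ2 * s + C μ4 * s ^ 2 + C μ6 * s ^ 3) * X ^ 2
      + (C μ1 * s + C μ3 * s ^ 2) * X

/-- Embedding of power series into formal Laurent series. -/
abbrev toL : PowerSeries CoefRing →+* LaurentSeries CoefRing :=
  HahnSeries.ofPowerSeries ℤ CoefRing

/-- The Laurent series `t`. -/
def tL : LaurentSeries CoefRing := HahnSeries.single (1 : ℤ) (1 : CoefRing)

/-- Constant Laurent series. -/
abbrev CL : CoefRing →+* LaurentSeries CoefRing := HahnSeries.C

/-- `IsXY s x y` says: `s` is the canonical solution of the functional equation,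
`x = 1/s` (the expansion `x⟨t⟩` of the `x`-coordinate) and `y = -x/t`
(the expansion `y⟨t⟩` of the `y`-coordinate). -/
structure IsXY (s : PowerSeries CoefRing)
    (x y : LaurentSeries CoefRing) : Prop where
  s0 : PowerSeries.constantCoeff s = 0
  seq : SFunEq s
  hx : x * toL s = 1
  hy : y * tL = -x

namespace Stmt10Aux
open PowerSeries Finset

lemma q2coeff (s : PowerSeries CoefRing) (m : ℕ) : coeff m (s ^ 2) =
    ∑ i ∈ range (m+1), coeff i s * coeff (m - i) s := by
  rw [pow_two, coeff_mul, Finset.Nat.sum_antidiagonal_eq_sum_range_succ_mk]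

lemma q3coeff (s : PowerSeries CoefRing) (m : ℕ) : coeff m (s ^ 3) =
    ∑ i ∈ range (m+1), coeff i (s ^ 2) * coeff (m - i) s := by
  rw [pow_succ, coeff_mul, Finset.Nat.sum_antidiagonal_eq_sum_range_succ_mk]

lemma mulcoeff (w v : PowerSeries CoefRing) (m : ℕ) : coeff m (w * v) =
    ∑ i ∈ range (m+1), coeff i w * coeff (m - i) v := by
  rw [coeff_mul, Finset.Nat.sum_antidiagonal_eq_sum_range_succ_mk]

lemma scoeff (s : PowerSeries CoefRing) (h0 : constantCoeff s = 0) (hs : SFunEq s) :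
    coeff 0 s = 0 ∧ coeff 1 s = 0 ∧ coeff 2 s = 1 ∧
    coeff 3 s = μ1 ∧ coeff 4 s = μ2 + μ1^2 ∧
    coeff 5 s = μ3 + 2*μ1*μ2 + μ1^3 ∧
    coeff 6 s = μ4 + μ2^2 + 3*μ1*μ3 + 3*μ1^2*μ2 + μ1^4 ∧
    coeff 7 s = 3*μ2*μ3 + 3*μ1*μ4 + 3*μ1*μ2^2 + 6*μ1^2*μ3 + 4*μ1^3*μ2 + μ1^5 := by
  have e0 : coeff 0 s = 0 := by rw [coeff_zero_eq_constantCoeff]; exact h0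
  have hs' : s = (1 + C μ2 * s + C μ4 * s ^ 2 + C μ6 * s ^ 3) * X ^ 2
      + (C μ1 * s + C μ3 * s ^ 2) * X ^ 1 := by
    rw [pow_one]; exact hs
  have E : ∀ n : ℕ, coeff n s =
      (if 2 ≤ n then coeff (n-2)
        (1 + C μ2 * s + C μ4 * s ^ 2 + C μ6 * s ^ 3) else 0)
      + (if 1 ≤ n then coeff (n-1)
        (C μ1 * s + C μ3 * s ^ 2) else 0) := by
    intro n
    conv_lhs => rw [hs']
    rw [map_add, coeff_mul_X_pow', coeff_mul_X_pow']
  have q2_0 : coeff 0 (s^2) = 0 := by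
    rw [q2coeff]; simp [Finset.sum_range_succ, e0]
  have e1 : coeff 1 s = 0 := by
    have h := E 1; simp [Finset.sum_range_succ, e0, q2_0, h0] at h; exact h
  have q2_1 : coeff 1 (s^2) = 0 := by
    rw [q2coeff]; simp [Finset.sum_range_succ, e0, e1]
  have q2_2 : coeff 2 (s^2) = 0 := by
    rw [q2coeff]; simp [Finset.sum_range_succ, e0, e1]
  have q2_3 : coeff 3 (s^2) = 0 := by
    rw [q2coeff]; simp [Finset.sum_range_succ, e0, e1]
  have q3_0 : coeff 0 (s^3) = 0 := by
    rw [q3coeff]; simp [Finset.sum_range_succ, e0, q2_0]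
  have q3_1 : coeff 1 (s^3) = 0 := by
    rw [q3coeff]; simp [Finset.sum_range_succ, e0, e1, q2_0, q2_1]
  have q3_2 : coeff 2 (s^3) = 0 := by
    rw [q3coeff]; simp [Finset.sum_range_succ, e0, e1, q2_0, q2_1, q2_2]
  have q3_3 : coeff 3 (s^3) = 0 := by
    rw [q3coeff]; simp [Finset.sum_range_succ, e0, e1, q2_0, q2_1, q2_2, q2_3]
  have e2 : coeff 2 s = 1 := by
    have h := E 2; simp [e0, e1, q2_0, q2_1, q3_0, h0] at h; exact h
  have e3 : coeff 3 s = μ1 := by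
    have h := E 3; simp [e0, e1, e2, q2_1, q2_2, q3_1, h0] at h; exact h
  have e4 : coeff 4 s = μ2 + μ1^2 := by
    have h := E 4; simp [e1, e2, e3, q2_2, q2_3, q3_2, h0] at h
    rw [h]; ring
  have q2_4 : coeff 4 (s^2) = 1 := by
    rw [q2coeff]; simp [Finset.sum_range_succ, e0, e1, e2]
  have e5 : coeff 5 s = μ3 + 2*μ1*μ2 + μ1^3 := by
    have h := E 5; simp [e2, e3, e4, q2_3, q2_4, q3_3, h0] at h
    rw [h]; ring
  have q2_5 : coeff 5 (s^2) = 2*μ1 := by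
    rw [q2coeff]; simp [Finset.sum_range_succ, e0, e1, e2, e3]; ring
  have q3_4 : coeff 4 (s^3) = 0 := by
    rw [q3coeff]; simp [Finset.sum_range_succ, e0, e1, q2_0, q2_1, q2_2, q2_3, q2_4]
  have e6 : coeff 6 s = μ4 + μ2^2 + 3*μ1*μ3 + 3*μ1^2*μ2 + μ1^4 := by
    have h := E 6; simp [e3, e4, e5, q2_4, q2_5, q3_4, h0] at h
    rw [h]; ring
  have q2_6 : coeff 6 (s^2) = 2*μ2 + 3*μ1^2 := by
    rw [q2coeff]; simp [Finset.sum_range_succ, e0, e1, e2, e3, e4]; ring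
  have q3_5 : coeff 5 (s^3) = 0 := by
    rw [q3coeff]; simp [Finset.sum_range_succ, e0, e1, q2_0, q2_1, q2_2, q2_3, q2_4, q2_5]
  have e7 : coeff 7 s = 3*μ2*μ3 + 3*μ1*μ4 + 3*μ1*μ2^2 + 6*μ1^2*μ3 + 4*μ1^3*μ2 + μ1^5 := by
    have h := E 7; simp [e4, e5, e6, q2_5, q2_6, q3_5, h0] at h
    rw [h]; ring
  exact ⟨e0, e1, e2, e3, e4, e5, e6, e7⟩

end Stmt10Aux

set_option maxHeartbeats 2000000 in
open PowerSeries Finset Stmt10Aux in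
/-- The expansion of `η₁ = -x·dx/(2y+μ₁x+μ₃)`: with `w = (dx⟨t⟩/dt)/f_y⟨t⟩`
(so `η₁⟨t⟩/dt = -x⟨t⟩·w`), one has
`η₁⟨t⟩/dt ∈ -t⁻² + t·ℤ[μ⃗][[t]]`; in particular the coefficients of `t⁻¹` and
`t⁰` vanish, and the expansion begins
`-t⁻² - μ₃t - (μ₄+2μ₁μ₃)t² - (2μ₁μ₄+2μ₂μ₃+3μ₁²μ₃)t³ - ⋯`. -/
theorem statement10 (s : PowerSeries CoefRing) (x y : LaurentSeries CoefRing)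
    (h : IsXY s x y) (w : PowerSeries CoefRing)
    (hw : -(toL s.derivativeFun) * x ^ 2 = toL w * (2 * y + CL μ1 * x + CL μ3)) :
    (∀ n : ℤ, n < -2 → (-x * toL w).coeff n = 0) ∧
    (-x * toL w).coeff (-2) = -1 ∧
    (-x * toL w).coeff (-1) = 0 ∧
    (-x * toL w).coeff 0 = 0 ∧
    (-x * toL w).coeff 1 = -μ3 ∧
    (-x * toL w).coeff 2 = -(μ4 + 2 * μ1 * μ3) ∧
    (-x * toL w).coeff 3 = -(2 * μ1 * μ4 + 2 * μ2 * μ3 + 3 * μ1 ^ 2 * μ3) := by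
  obtain ⟨s0, seq, hx, hy⟩ := h
  obtain ⟨e0, e1, e2, e3, e4, e5, e6, e7⟩ := scoeff s s0 seq
  have h2 : (2 : CoefRing) ≠ 0 := by norm_num
  -- q2 values
  have q2_0 : coeff 0 (s^2) = 0 := by
    rw [q2coeff]; simp [Finset.sum_range_succ, e0]
  have q2_1 : coeff 1 (s^2) = 0 := by
    rw [q2coeff]; simp [Finset.sum_range_succ, e0, e1]
  have q2_2 : coeff 2 (s^2) = 0 := by
    rw [q2coeff]; simp [Finset.sum_range_succ, e0, e1]
  have q2_3 : coeff 3 (s^2) = 0 := by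
    rw [q2coeff]; simp [Finset.sum_range_succ, e0, e1]
  have q2_4 : coeff 4 (s^2) = 1 := by
    rw [q2coeff]; simp [Finset.sum_range_succ, e0, e1, e2]
  have q2_5 : coeff 5 (s^2) = 2*μ1 := by
    rw [q2coeff]; simp [Finset.sum_range_succ, e0, e1, e2, e3]; ring
  have q2_6 : coeff 6 (s^2) = 2*μ2 + 3*μ1^2 := by
    rw [q2coeff]; simp [Finset.sum_range_succ, e0, e1, e2, e3, e4]; ring
  -- the key power series identity satisfied by w
  have key : toL w * (CL μ1 * toL s * tL^3 + CL μ3 * (toL s)^2 * tL^3 - 2 * toL s * tL^2)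
      = -(toL s.derivativeFun * tL^3) := by
    linear_combination (-(toL s)^2 * tL^3) * hw
      + (toL w * (-(CL μ1) * toL s * tL^3 + 2 * toL s * tL^2)
        - toL s.derivativeFun * tL^3 * (1 + x * toL s)) * hx
      + (-2 * toL w * (toL s)^2 * tL^2) * hy
  have key2 : w * (C μ1 * s) * X^3 + w * (C μ3 * s^2) * X^3
      - (w*s) * X^2 - (w*s) * X^2 = -(s.derivativeFun * X^3) := by
    apply HahnSeries.ofPowerSeries_injective (Γ := ℤ)
    have : (HahnSeries.ofPowerSeries ℤ CoefRing) (w * (C μ1 * s) * X^3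
        + w * (C μ3 * s^2) * X^3 - (w*s) * X^2 - (w*s) * X^2)
        = toL w * (CL μ1 * toL s * tL^3 + CL μ3 * (toL s)^2 * tL^3 - 2 * toL s * tL^2) := by
      rw [tL, ← HahnSeries.ofPowerSeries_X (Γ := ℤ) (R := CoefRing)]
      push_cast [map_add, map_sub, map_mul, map_pow, HahnSeries.ofPowerSeries_C]
      ring
    rw [this, key, map_neg, map_mul, map_pow, tL, HahnSeries.ofPowerSeries_X]
  have hd : ∀ n : ℕ, coeff n s.derivativeFun = coeff (n + 1) s * (n + 1) :=
    fun n => coeff_derivative s n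
  -- coefficient extraction for w
  have F : ∀ n : ℕ,
      (if 3 ≤ n then coeff (n-3) (w * (C μ1 * s)) else 0)
      + (if 3 ≤ n then coeff (n-3) (w * (C μ3 * s^2)) else 0)
      - (if 2 ≤ n then coeff (n-2) (w*s) else 0)
      - (if 2 ≤ n then coeff (n-2) (w*s) else 0)
      = -(if 3 ≤ n then coeff (n-3) s.derivativeFun else 0) := by
    intro n
    have hc := congrArg (coeff n) key2
    rwa [map_sub, map_sub, map_add, map_neg, coeff_mul_X_pow', coeff_mul_X_pow',
      coeff_mul_X_pow', coeff_mul_X_pow'] at hc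
  have h4 := F 4
  have h5 := F 5
  have h6 := F 6
  have h7 := F 7
  have h8 := F 8
  have h9 := F 9
  norm_num [mulcoeff, Finset.sum_range_succ, coeff_C_mul, hd,
    e0, e1, e2, e3, e4, e5, e6, e7, q2_0, q2_1, q2_2, q2_3, q2_4, q2_5, q2_6]
    at h4
  norm_num [mulcoeff, Finset.sum_range_succ, coeff_C_mul, hd,
    e0, e1, e2, e3, e4, e5, e6, e7, q2_0, q2_1, q2_2, q2_3, q2_4, q2_5, q2_6] at h5
  norm_num [mulcoeff, Finset.sum_range_succ, coeff_C_mul, hd,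
    e0, e1, e2, e3, e4, e5, e6, e7, q2_0, q2_1, q2_2, q2_3, q2_4, q2_5, q2_6] at h6
  norm_num [mulcoeff, Finset.sum_range_succ, coeff_C_mul, hd,
    e0, e1, e2, e3, e4, e5, e6, e7, q2_0, q2_1, q2_2, q2_3, q2_4, q2_5, q2_6] at h7
  norm_num [mulcoeff, Finset.sum_range_succ, coeff_C_mul, hd,
    e0, e1, e2, e3, e4, e5, e6, e7, q2_0, q2_1, q2_2, q2_3, q2_4, q2_5, q2_6] at h8
  norm_num [mulcoeff, Finset.sum_range_succ, coeff_C_mul, hd,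
    e0, e1, e2, e3, e4, e5, e6, e7, q2_0, q2_1, q2_2, q2_3, q2_4, q2_5, q2_6] at h9
  have w0 : constantCoeff w = 1 := by
    apply mul_left_cancel₀ h2; linear_combination -h4
  rw [w0] at h5 h6 h7 h8 h9
  have w1 : coeff 1 w = μ1 := by
    apply mul_left_cancel₀ h2; linear_combination -h5
  rw [w1] at h6 h7 h8 h9
  have w2 : coeff 2 w = μ2 + μ1^2 := by
    apply mul_left_cancel₀ h2; linear_combination -h6
  rw [w2] at h7 h8 h9
  have w3 : coeff 3 w = 2*μ3 + 2*μ1*μ2 + μ1^3 := by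
    apply mul_left_cancel₀ h2; linear_combination -h7
  rw [w3] at h8 h9
  have w4 : coeff 4 w = 2*μ4 + μ2^2 + 6*μ1*μ3 + 3*μ1^2*μ2 + μ1^4 := by
    apply mul_left_cancel₀ h2; linear_combination -h8
  rw [w4] at h9
  have w5 : coeff 5 w = 6*μ2*μ3 + 6*μ1*μ4 + 3*μ1*μ2^2 + 12*μ1^2*μ3 + 4*μ1^3*μ2 + μ1^5 := by
    apply mul_left_cancel₀ h2; linear_combination -h9
  -- s = u * X^2 with u a unit
  set u : PowerSeries CoefRing := PowerSeries.mk (fun n => coeff (n+2) s) with hu_def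
  have hcu : ∀ m : ℕ, coeff m u = coeff (m+2) s := fun m => coeff_mk m _
  have hsu : s = u * X^2 := by
    apply PowerSeries.ext; intro n
    rw [coeff_mul_X_pow']
    split_ifs with hn
    · rw [hcu, show n - 2 + 2 = n from by omega]
    · have hn2 : n < 2 := by omega
      interval_cases n
      · exact e0
      · exact e1
  have hcu0 : constantCoeff u = 1 := by
    rw [← coeff_zero_eq_constantCoeff, hcu]; exact e2
  have hu : IsUnit u := by
    rw [isUnit_iff_constantCoeff, hcu0]; exact isUnit_one
  obtain ⟨U, hU⟩ := hu
  set p : PowerSeries CoefRing := (↑U⁻¹ : PowerSeries CoefRing) * w with hp_def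
  have hup : u * p = w := by
    rw [hp_def, ← hU, ← mul_assoc, U.mul_inv, one_mul]
  -- coefficients of p
  have hP : ∀ n : ℕ, coeff n (u * p) = coeff n w := fun n => by rw [hup]
  have g0 := hP 0
  have g1 := hP 1
  have g2 := hP 2
  have g3 := hP 3
  have g4 := hP 4
  have g5 := hP 5
  norm_num [mulcoeff, Finset.sum_range_succ, hcu, hcu0, e2, e3, e4, e5, e6, e7,
    w0, w1, w2, w3, w4, w5] at g0
  norm_num [mulcoeff, Finset.sum_range_succ, hcu, hcu0, e2, e3, e4, e5, e6, e7,
    w0, w1, w2, w3, w4, w5] at g1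
  norm_num [mulcoeff, Finset.sum_range_succ, hcu, hcu0, e2, e3, e4, e5, e6, e7,
    w0, w1, w2, w3, w4, w5] at g2
  norm_num [mulcoeff, Finset.sum_range_succ, hcu, hcu0, e2, e3, e4, e5, e6, e7,
    w0, w1, w2, w3, w4, w5] at g3
  norm_num [mulcoeff, Finset.sum_range_succ, hcu, hcu0, e2, e3, e4, e5, e6, e7,
    w0, w1, w2, w3, w4, w5] at g4
  norm_num [mulcoeff, Finset.sum_range_succ, hcu, hcu0, e2, e3, e4, e5, e6, e7,
    w0, w1, w2, w3, w4, w5] at g5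
  have p0 : constantCoeff p = 1 := g0
  rw [p0] at g1 g2 g3 g4 g5
  have p1 : coeff 1 p = 0 := by linear_combination g1
  rw [p1] at g2 g3 g4 g5
  have p2 : coeff 2 p = 0 := by linear_combination g2
  rw [p2] at g3 g4 g5
  have p3 : coeff 3 p = μ3 := by linear_combination g3
  rw [p3] at g4 g5
  have p4 : coeff 4 p = μ4 + 2*μ1*μ3 := by linear_combination g4
  rw [p4] at g5
  have p5 : coeff 5 p = 2*μ2*μ3 + 2*μ1*μ4 + 3*μ1^2*μ3 := by linear_combination g5
  -- identification of the Laurent series -x * toL w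
  have hSne : toL s ≠ 0 := by
    intro h0
    have hs0 : s = 0 := HahnSeries.ofPowerSeries_injective (by rw [h0, map_zero])
    rw [hs0] at e2
    simp at e2
  have hη : -x * toL w = HahnSeries.single (-2 : ℤ) (-1 : CoefRing) * toL p := by
    apply mul_right_cancel₀ hSne
    have hA : (-x * toL w) * toL s = -toL w := by linear_combination (-(toL w)) * hx
    have hB : (HahnSeries.single (-2 : ℤ) (-1 : CoefRing) * toL p) * toL s = -toL w := by
      rw [mul_assoc, ← map_mul]
      have hps : p * s = w * X^2 := by
        rw [hsu]; linear_combination (X^2 : PowerSeries CoefRing) * hup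
      rw [hps, map_mul, map_pow, HahnSeries.ofPowerSeries_X,
        HahnSeries.single_pow, mul_comm (toL w), ← mul_assoc, HahnSeries.single_mul_single]
      norm_num [HahnSeries.single_zero_mul_eq_smul]
      exact neg_one_mul (toL w)
    rw [hA, hB]
  have cf : ∀ n : ℤ, (HahnSeries.single (-2 : ℤ) (-1 : CoefRing) * toL p).coeff n
      = -((toL p).coeff (n+2)) := by
    intro n
    have hcoef := HahnSeries.coeff_single_mul_add (r := (-1 : CoefRing)) (x := toL p)
      (a := n + 2) (b := (-2 : ℤ))
    rw [show n + 2 + (-2) = n by ring] at hcoef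
    rw [hcoef]; ring
  rw [hη]
  refine ⟨?_, ?_, ?_, ?_, ?_, ?_, ?_⟩
  · intro n hn
    rw [cf, PowerSeries.coeff_coe, if_pos (by omega)]
    ring
  · rw [cf]; norm_num [PowerSeries.coeff_coe, coeff_zero_eq_constantCoeff, p0]
  · rw [cf]; norm_num [PowerSeries.coeff_coe, p1]
  · rw [cf]; norm_num [PowerSeries.coeff_coe, p2]
  · rw [cf]; norm_num [PowerSeries.coeff_coe, p3]
  · rw [cf]; norm_num [PowerSeries.coeff_coe, p4]
  · rw [cf]; norm_num [PowerSeries.coeff_coe, p5]; try ring
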